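/- Suppose R contains ℚ (R is a ℚ-algebra), let d ≥ 0 and let m be an integer with 0 ≤ m ≤ d/2. If h ∈ R[X_1,…,X_N] is harmonic and homogeneous of degree d − 2m, then (X·X)·Δ((X·X)^m · h) = 2m·(N − 2 + 2d − 2m)·(X·X)^m · h; that is, (X·X)^m · h is an eigenvector of the operator p ↦ (X·X)·Δp on homogeneous polynomials of degree d with eigenvalue 2m(N−2+2d−2m). -/
import Mathlib

open MvPolynomial

/-- The rotation generator `M_{jk} p = X_j ∂_k p − X_k ∂_j p`. -/
noncomputable def rot {R : Type*} [CommRing R] {N : ℕ} (j k : Fin N)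
    (p : MvPolynomial (Fin N) R) : MvPolynomial (Fin N) R :=
  X j * pderiv k p - X k * pderiv j p

/-- The Laplacian `Δ p = Σ_j ∂_j² p`. -/
noncomputable def lap {R : Type*} [CommRing R] {N : ℕ}
    (p : MvPolynomial (Fin N) R) : MvPolynomial (Fin N) R :=
  ∑ j, pderiv j (pderiv j p)

/-- The polynomial `X·X = X_1² + ⋯ + X_N²`. -/
noncomputable def XX (R : Type*) [CommRing R] (N : ℕ) : MvPolynomial (Fin N) R :=
  ∑ j, X j ^ 2

lemma euler_mono {R : Type*} [CommRing R] {N : ℕ} (j : Fin N) (s : Fin N →₀ ℕ) (a : R) :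
    X j * pderiv j (monomial s a) = (s j) • monomial s a := by
  rw [pderiv_monomial]
  rcases Nat.eq_zero_or_pos (s j) with h0 | hpos
  · simp [h0]
  · rw [X, monomial_mul, one_mul]
    have : Finsupp.single j 1 + (s - Finsupp.single j 1) = s := by
      ext i
      rcases eq_or_ne i j with rfl | hne
      · simp; omega
      · simp [Finsupp.single_apply, Ne.symm hne]
    rw [this, smul_monomial]
    congr 1
    rw [mul_comm]
    simp [nsmul_eq_mul]

/-- Euler's identity. -/
lemma euler {R : Type*} [CommRing R] {N : ℕ} {n : ℕ} (p : MvPolynomial (Fin N) R)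
    (hp : p.IsHomogeneous n) : ∑ j, X j * pderiv j p = n • p := by
  conv_lhs => rw [← p.support_sum_monomial_coeff]
  simp only [map_sum, Finset.mul_sum]
  rw [Finset.sum_comm]
  conv_rhs => rw [← p.support_sum_monomial_coeff, Finset.smul_sum]
  refine Finset.sum_congr rfl fun s hs => ?_
  simp only [euler_mono]
  rw [← Finset.sum_smul]
  congr 1
  have hco : coeff s p ≠ 0 := mem_support_iff.mp hs
  have := hp hco
  rw [← this, Finsupp.weight_apply, Finsupp.sum_fintype]
  · simp
  · simp

lemma pderiv_XX {R : Type*} [CommRing R] {N : ℕ} (k : Fin N) :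
    pderiv k (XX R N) = 2 * X k := by
  simp [XX, pderiv_pow, pderiv_X, Pi.single_apply, mul_ite, Finset.sum_ite_eq']

lemma isHomogeneous_XX (R : Type*) [CommRing R] (N : ℕ) : (XX R N).IsHomogeneous 2 :=
  IsHomogeneous.sum _ _ _ fun i _ => isHomogeneous_X_pow i 2

lemma lap_XX_mul {R : Type*} [CommRing R] {N : ℕ} (q : MvPolynomial (Fin N) R) :
    lap (XX R N * q) = (2 * N) • q + 4 • (∑ j, X j * pderiv j q) + XX R N * lap q := by
  unfold lap
  have step : ∀ k : Fin N, pderiv k (pderiv k (XX R N * q)) =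
      2 • q + 4 • (X k * pderiv k q) + XX R N * pderiv k (pderiv k q) := by
    intro k
    have h2 : (pderiv k) (2 : MvPolynomial (Fin N) R) = 0 := by
      rw [show (2 : MvPolynomial (Fin N) R) = C 2 from (map_ofNat C 2).symm, pderiv_C]
    simp [pderiv_mul, pderiv_XX, pderiv_X_self, two_smul, h2]
    ring
  rw [Finset.sum_congr rfl fun k _ => step k, Finset.sum_add_distrib, Finset.sum_add_distrib]
  congr 1
  · congr 1
    · rw [Finset.sum_const, Finset.card_univ, Fintype.card_fin, smul_smul, mul_comm]
    · rw [Finset.smul_sum]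
  · rw [Finset.mul_sum]

/-- The key inductive computation: `Δ((X·X)^{m+1} h) = 2(m+1)(n+2e+2(m+1)) (X·X)^m h`
for `h` harmonic homogeneous of degree `e`, in `N = n+2` variables. -/
lemma key {R : Type*} [CommRing R] {n : ℕ} {e : ℕ} (h : MvPolynomial (Fin (2 + n)) R)
    (hharm : lap h = 0) (hhom : h.IsHomogeneous e) (m : ℕ) :
    lap (XX R (2 + n) ^ (m + 1) * h) =
      (2 * (m + 1) * (n + 2 * e + 2 * (m + 1))) • (XX R (2 + n) ^ m * h) := by
  induction m with
  | zero =>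
    rw [pow_one, pow_zero, one_mul, lap_XX_mul, hharm, mul_zero, add_zero,
      euler h hhom, smul_smul]
    rw [← add_smul]
    congr 1
    ring
  | succ m ih =>
    have hq : (XX R (2 + n) ^ (m + 1) * h).IsHomogeneous (2 * (m + 1) + e) := by
      simpa using ((isHomogeneous_XX R (2 + n)).pow (m + 1)).mul hhom
    rw [show XX R (2 + n) ^ (m + 1 + 1) * h = XX R (2 + n) * (XX R (2 + n) ^ (m + 1) * h) by
      ring, lap_XX_mul, euler _ hq, ih, mul_smul_comm,
      show XX R (2 + n) * (XX R (2 + n) ^ m * h) = XX R (2 + n) ^ (m + 1) * h by ring,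
      smul_smul]
    rw [← add_smul, ← add_smul]
    congr 1
    ring

/-- for `0 ≤ m` with `2m ≤ d` and `h` harmonic homogeneous of degree
`d − 2m`, `(X·X)^m·h` is an eigenvector of `p ↦ (X·X)·Δp` with eigenvalue
`2m(N−2+2d−2m)`. -/
theorem stmt8 {R : Type*} [CommRing R] [Algebra ℚ R] {N : ℕ} (hN : 2 ≤ N)
    (d m : ℕ) (hm : 2 * m ≤ d) (h : MvPolynomial (Fin N) R)
    (hharm : lap h = 0) (hhom : h.IsHomogeneous (d - 2 * m)) :
    XX R N * lap (XX R N ^ m * h) =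
      (2 * m * (N - 2 + 2 * d - 2 * m)) • (XX R N ^ m * h) := by
  obtain ⟨n, rfl⟩ := Nat.exists_eq_add_of_le hN
  cases m with
  | zero => simp [pow_zero, one_mul, hharm]
  | succ k =>
    rw [key h hharm hhom k]
    rw [mul_smul_comm,
      show XX R (2 + n) * (XX R (2 + n) ^ k * h) = XX R (2 + n) ^ (k + 1) * h by ring]
    congr 2
    omega
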